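/- For fixed a ∈ (0, 1/2], the function f₁₀(r) = 𝒦ₐ(r) − 3(1-a)·(ℰₐ(r) − (1-r²)·𝒦ₐ(r))/r² is strictly increasing on (0,1). -/

import Mathlib

open Real Filter Set Topology

/-- Pochhammer symbol (rising factorial) for real `x`. -/
noncomputable def poch (x : ℝ) (n : ℕ) : ℝ := (ascPochhammer ℝ n).eval x

/-- Generalized complete elliptic integral of the first kind. -/
noncomputable def Ka (a r : ℝ) : ℝ :=
  (π / 2) * ∑' n : ℕ, (poch a n * poch (1 - a) n / (n.factorial : ℝ) ^ 2) * r ^ (2 * n)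

/-- Generalized complete elliptic integral of the second kind. -/
noncomputable def Ea (a r : ℝ) : ℝ :=
  (π / 2) * ∑' n : ℕ, (poch (a - 1) n * poch (1 - a) n / (n.factorial : ℝ) ^ 2) * r ^ (2 * n)

/-- Generalized Grötzsch ring function. -/
noncomputable def muG (a r : ℝ) : ℝ :=
  π / (2 * Real.sin (π * a)) * (Ka a (Real.sqrt (1 - r ^ 2)) / Ka a r)

/-- Generalized Hersch–Pfluger distortion function. -/
noncomputable def phiHP (a K r : ℝ) : ℝ := Function.invFun (muG a) (muG a r / K)

/-- The function mₐ(r). -/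
noncomputable def mA (a r : ℝ) : ℝ :=
  2 / (π * Real.sin (π * a)) * (1 - r ^ 2) * Ka a (Real.sqrt (1 - r ^ 2)) * Ka a r

/-- Digamma function (as the logarithmic derivative of Γ). -/
noncomputable def psiDG (x : ℝ) : ℝ := deriv (fun t => Real.log (Real.Gamma t)) x

/-- Ramanujan constant R(a). -/
noncomputable def RamanujanR (a : ℝ) : ℝ :=
  -2 * Real.eulerMascheroniConstant - psiDG a - psiDG (1 - a)

/- ### Auxiliary material -/

lemma poch_zero' (x : ℝ) : poch x 0 = 1 := by simp [poch]

lemma poch_succ' (x : ℝ) (n : ℕ) : poch x (n+1) = poch x n * (x + n) :=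
  ascPochhammer_succ_eval n x

lemma poch_succ_left (x : ℝ) (n : ℕ) : poch x (n+1) = x * poch (x+1) n := by
  induction n with
  | zero => simp [poch_zero', poch_succ']
  | succ n ih =>
    rw [poch_succ', ih, poch_succ']
    push_cast; ring

lemma poch_pos {x : ℝ} (hx : 0 < x) (n : ℕ) : 0 < poch x n := by
  induction n with
  | zero => simp [poch_zero']
  | succ n ih => rw [poch_succ']; positivity

lemma poch_le_factorial {x : ℝ} (hx0 : 0 < x) (hx1 : x ≤ 1) (n : ℕ) :
    poch x n ≤ (n.factorial : ℝ) := by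
  induction n with
  | zero => simp [poch_zero']
  | succ n ih =>
    rw [poch_succ', Nat.factorial_succ, Nat.cast_mul]
    have := poch_pos hx0 n
    have h2 : (0:ℝ) < x + n := by positivity
    calc poch x n * (x + n) ≤ (n.factorial : ℝ) * ((n:ℝ)+1) :=
          mul_le_mul ih (by linarith) h2.le (by positivity)
      _ = ((n+1:ℕ):ℝ) * (n.factorial : ℝ) := by push_cast; ring

noncomputable def cA (a : ℝ) (n : ℕ) : ℝ :=
  poch a n * poch (1-a) n / (n.factorial : ℝ)^2

noncomputable def dA (a : ℝ) (n : ℕ) : ℝ :=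
  poch (a-1) n * poch (1-a) n / (n.factorial : ℝ)^2

noncomputable def eA (a : ℝ) (n : ℕ) : ℝ := a/((n:ℝ)+1) * cA a n

noncomputable def gA (a : ℝ) (n : ℕ) : ℝ := (1 - 3*a*(1-a)/((n:ℝ)+1)) * cA a n

section bounds

variable {a : ℝ} (ha0 : 0 < a) (ha2 : a ≤ 1/2)
include ha0 ha2

lemma cA_pos (n : ℕ) : 0 < cA a n := by
  have h1 : 0 < poch a n := poch_pos ha0 n
  have h2 : 0 < poch (1-a) n := poch_pos (by linarith) n
  have h3 : 0 < (n.factorial : ℝ) := by exact_mod_cast n.factorial_pos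
  unfold cA; positivity

lemma cA_le_one (n : ℕ) : cA a n ≤ 1 := by
  have h1 : poch a n ≤ (n.factorial : ℝ) := poch_le_factorial ha0 (by linarith) n
  have h2 : poch (1-a) n ≤ (n.factorial : ℝ) := poch_le_factorial (by linarith) (by linarith) n
  have h3 : (0:ℝ) < (n.factorial : ℝ) := by exact_mod_cast n.factorial_pos
  have h1' : 0 < poch a n := poch_pos ha0 n
  have h2' : 0 < poch (1-a) n := poch_pos (by linarith) n
  unfold cA
  rw [div_le_one (by positivity), sq]
  exact mul_le_mul h1 h2 h2'.le h3.le

lemma cA_abs_le_one (n : ℕ) : |cA a n| ≤ 1 := by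
  rw [abs_of_pos (cA_pos ha0 ha2 n)]; exact cA_le_one ha0 ha2 n

lemma dA_abs_le_one (n : ℕ) : |dA a n| ≤ 1 := by
  cases n with
  | zero => simp [dA, poch_zero']
  | succ n =>
    have h1 : poch a n ≤ (n.factorial : ℝ) := poch_le_factorial ha0 (by linarith) n
    have h2 : poch (1-a) (n+1) ≤ ((n+1).factorial : ℝ) :=
      poch_le_factorial (by linarith) (by linarith) (n+1)
    have h1' : 0 < poch a n := poch_pos ha0 n
    have h2' : 0 < poch (1-a) (n+1) := poch_pos (by linarith) (n+1)
    have h3 : (0:ℝ) < ((n+1).factorial : ℝ) := by exact_mod_cast (n+1).factorial_pos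
    have hfle : (n.factorial : ℝ) ≤ ((n+1).factorial : ℝ) := by
      exact_mod_cast Nat.factorial_le (Nat.le_succ n)
    have hd : dA a (n+1) = (a-1) * poch a n * poch (1-a) (n+1) / ((n+1).factorial : ℝ)^2 := by
      unfold dA
      rw [poch_succ_left (a-1) n, show a - 1 + 1 = a by ring]
    rw [hd, abs_div, abs_of_pos (by positivity : (0:ℝ) < ((n+1).factorial : ℝ)^2),
      div_le_one (by positivity)]
    have habs : |(a-1) * poch a n * poch (1-a) (n+1)| ≤ 1 * (n.factorial : ℝ) * ((n+1).factorial : ℝ) := by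
      rw [abs_mul, abs_mul]
      have ha1 : |a - 1| ≤ 1 := by rw [abs_le]; constructor <;> linarith
      gcongr
      · rw [abs_of_pos h1']; exact h1
      · rw [abs_of_pos h2']; exact h2
    calc |(a-1) * poch a n * poch (1-a) (n+1)| ≤ 1 * (n.factorial : ℝ) * ((n+1).factorial : ℝ) := habs
      _ ≤ 1 * ((n+1).factorial : ℝ) * ((n+1).factorial : ℝ) := by gcongr
      _ = ((n+1).factorial : ℝ)^2 := by ring

lemma eA_abs_le_one (n : ℕ) : |eA a n| ≤ 1 := by
  unfold eA
  rw [abs_mul]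
  have h1 : |a/((n:ℝ)+1)| ≤ 1 := by
    have hn : (1:ℝ) ≤ (n:ℝ)+1 := by
      have := Nat.cast_nonneg (α := ℝ) n; linarith
    rw [abs_of_pos (by positivity), div_le_one (by positivity)]
    linarith
  calc |a/((n:ℝ)+1)| * |cA a n| ≤ 1 * 1 :=
        mul_le_mul h1 (cA_abs_le_one ha0 ha2 n) (abs_nonneg _) zero_le_one
    _ = 1 := by ring

lemma coef_factor_bounds (n : ℕ) :
    1/4 ≤ 1 - 3*a*(1-a)/((n:ℝ)+1) ∧ 1 - 3*a*(1-a)/((n:ℝ)+1) ≤ 1 := by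
  have hn : (1:ℝ) ≤ (n:ℝ)+1 := by
    have := Nat.cast_nonneg (α := ℝ) n; linarith
  have h1 : 0 ≤ 3*a*(1-a) := by nlinarith
  have h2 : 3*a*(1-a) ≤ 3/4 := by nlinarith [sq_nonneg (a - 1/2)]
  have h3 : 3*a*(1-a)/((n:ℝ)+1) ≤ 3*a*(1-a) := by
    apply div_le_self h1 hn
  have h4 : 0 ≤ 3*a*(1-a)/((n:ℝ)+1) := by positivity
  constructor <;> linarith

lemma gA_pos (n : ℕ) : 0 < gA a n := by
  have h := (coef_factor_bounds ha0 ha2 n).1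
  have := cA_pos ha0 ha2 n
  unfold gA; nlinarith

lemma gA_abs_le_one (n : ℕ) : |gA a n| ≤ 1 := by
  obtain ⟨h1, h2⟩ := coef_factor_bounds ha0 ha2 (a := a) n
  have h3 := cA_pos ha0 ha2 n
  have h4 := cA_le_one ha0 ha2 n
  rw [abs_of_pos (gA_pos ha0 ha2 n)]
  unfold gA
  calc (1 - 3*a*(1-a)/((n:ℝ)+1)) * cA a n ≤ 1 * 1 := by
        apply mul_le_mul h2 h4 h3.le zero_le_one
    _ = 1 := by ring

end bounds

lemma key_identity {a : ℝ} (n : ℕ) :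
    dA a (n+1) + cA a n - cA a (n+1) = eA a n := by
  have hd : dA a (n+1) = (a-1) * poch a n * poch (1-a) (n+1) / ((n+1).factorial : ℝ)^2 := by
    unfold dA
    rw [poch_succ_left (a-1) n, show a - 1 + 1 = a by ring]
  have hF : (n.factorial : ℝ) ≠ 0 := by exact_mod_cast n.factorial_ne_zero
  have hn1 : ((n:ℝ)+1) ≠ 0 := by positivity
  rw [hd]
  unfold cA eA cA
  rw [poch_succ' a n, poch_succ' (1-a) n, Nat.factorial_succ, Nat.cast_mul]
  push_cast
  field_simp
  ring

lemma summable_aux {f : ℕ → ℝ} {C r : ℝ} (hf : ∀ n, |f n| ≤ C) (hr : |r| < 1) :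
    Summable (fun n => f n * r^(2*n)) := by
  have hr2 : r^2 < 1 := by
    have := sq_abs r
    nlinarith [abs_nonneg r]
  apply Summable.of_norm_bounded (g := fun n => C * (r^2)^n)
    ((summable_geometric_of_lt_one (sq_nonneg r) hr2).mul_left C)
  intro n
  have hpow : r^(2*n) = (r^2)^n := by rw [pow_mul]
  rw [Real.norm_eq_abs, abs_mul, hpow, abs_of_nonneg (pow_nonneg (sq_nonneg r) n)]
  exact mul_le_mul_of_nonneg_right (hf n) (pow_nonneg (sq_nonneg r) n)

set_option maxHeartbeats 1000000 in
lemma f10_eq {a : ℝ} (ha : a ∈ Set.Ioc (0:ℝ) (1/2)) {r : ℝ} (hr : r ∈ Set.Ioo (0:ℝ) 1) :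
    Ka a r - 3*(1 - a) * (Ea a r - (1 - r^2) * Ka a r) / r^2
      = (π/2) * ∑' n, gA a n * r^(2*n) := by
  obtain ⟨ha0, ha2⟩ := ha
  obtain ⟨hr0, hr1⟩ := hr
  have hrabs : |r| < 1 := by rw [abs_of_pos hr0]; exact hr1
  have hr2 : r^2 ≠ 0 := by positivity
  have Sc : Summable (fun n => cA a n * r^(2*n)) := summable_aux (cA_abs_le_one ha0 ha2) hrabs
  have Sd : Summable (fun n => dA a n * r^(2*n)) := summable_aux (dA_abs_le_one ha0 ha2) hrabs
  have Se : Summable (fun n => eA a n * r^(2*n)) := summable_aux (eA_abs_le_one ha0 ha2) hrabs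
  have SF : Summable (fun n => (dA a n - cA a n) * r^(2*n)) :=
    summable_aux (C := 2) (fun n => by
      calc |dA a n - cA a n| ≤ |dA a n| + |cA a n| := abs_sub (dA a n) (cA a n)
        _ ≤ 1 + 1 := add_le_add (dA_abs_le_one ha0 ha2 n) (cA_abs_le_one ha0 ha2 n)
        _ = 2 := by norm_num) hrabs
  have hKa : Ka a r = (π/2) * ∑' n, cA a n * r^(2*n) := by simp only [Ka, cA]
  have hEa : Ea a r = (π/2) * ∑' n, dA a n * r^(2*n) := by simp only [Ea, dA]
  -- step 1
  have step1 : (∑' n, dA a n * r^(2*n)) - ∑' n, cA a n * r^(2*n)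
      = ∑' n, (dA a (n+1) - cA a (n+1)) * r^(2*(n+1)) := by
    rw [← Summable.tsum_sub Sd Sc]
    have : (fun n => dA a n * r^(2*n) - cA a n * r^(2*n))
        = fun n => (dA a n - cA a n) * r^(2*n) := by funext n; ring
    rw [this, Summable.tsum_eq_zero_add SF]
    simp [dA, cA, poch_zero']
  have shift2 : ∀ n : ℕ, r^(2*(n+1)) = r^(2*n) * r^2 := by
    intro n; rw [show 2*(n+1) = 2*n + 2 by ring, pow_add]
  -- step 2
  have step2 : r^2 * ∑' n, cA a n * r^(2*n) = ∑' n, cA a n * r^(2*(n+1)) := by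
    rw [← tsum_mul_left]
    congr 1; funext n; rw [shift2 n]; ring
  have SFs : Summable (fun n => (dA a (n+1) - cA a (n+1)) * r^(2*(n+1))) :=
    (summable_nat_add_iff 1).mpr SF
  have Sc' : Summable (fun n => cA a n * r^(2*(n+1))) := by
    have : (fun n => cA a n * r^(2*(n+1))) = fun n => (cA a n * r^(2*n)) * r^2 := by
      funext n; rw [shift2 n]; ring
    rw [this]; exact Sc.mul_right _
  -- step 3
  have step3 : (∑' n, (dA a (n+1) - cA a (n+1)) * r^(2*(n+1))) + ∑' n, cA a n * r^(2*(n+1))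
      = r^2 * ∑' n, eA a n * r^(2*n) := by
    rw [← Summable.tsum_add SFs Sc', ← tsum_mul_left]
    congr 1; funext n
    rw [shift2 n, ← key_identity n]
    ring
  have keyE : Ea a r - (1 - r^2) * Ka a r = (π/2) * (r^2 * ∑' n, eA a n * r^(2*n)) := by
    rw [hKa, hEa, ← step3, ← step2, ← step1]
    ring
  have keyE2 : 3*(1 - a) * (Ea a r - (1 - r^2) * Ka a r) / r^2
      = (π/2) * ∑' n, (3*(1-a)) * (eA a n * r^(2*n)) := by
    rw [keyE, tsum_mul_left]
    field_simp
  rw [keyE2, hKa, ← mul_sub]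
  congr 1
  rw [← Summable.tsum_sub Sc (Se.mul_left _)]
  congr 1; funext n
  have : cA a n - 3*(1-a) * eA a n = gA a n := by
    unfold eA gA
    ring
  calc cA a n * r^(2*n) - 3*(1-a) * (eA a n * r^(2*n))
      = (cA a n - 3*(1-a) * eA a n) * r^(2*n) := by ring
    _ = gA a n * r^(2*n) := by rw [this]

theorem f10_strictMono (a : ℝ) (ha : a ∈ Set.Ioc (0:ℝ) (1/2)) :
    StrictMonoOn (fun r : ℝ => Ka a r - 3*(1 - a) * (Ea a r - (1 - r^2) * Ka a r) / r^2)
      (Set.Ioo 0 1) := by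
  intro r hr s hs hrs
  simp only
  rw [f10_eq ha hr, f10_eq ha hs]
  obtain ⟨ha0, ha2⟩ := ha
  have hrabs : |r| < 1 := by rw [abs_of_pos hr.1]; exact hr.2
  have hsabs : |s| < 1 := by rw [abs_of_pos (hr.1.trans hrs)]; exact hs.2
  have hπ : (0:ℝ) < π/2 := by positivity
  apply mul_lt_mul_of_pos_left _ hπ
  apply Summable.tsum_lt_tsum (i := 1)
  · intro n
    exact mul_le_mul_of_nonneg_left (pow_le_pow_left₀ hr.1.le hrs.le _)
      (gA_pos ha0 ha2 n).le
  · exact mul_lt_mul_of_pos_left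
      (pow_lt_pow_left₀ hrs hr.1.le (by norm_num)) (gA_pos ha0 ha2 1)
  · exact summable_aux (gA_abs_le_one ha0 ha2) hrabs
  · exact summable_aux (gA_abs_le_one ha0 ha2) hsabs
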